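/- Fix reference prices P_X, P_Y > 0, p₀ = P_X/P_Y, budget B > 0, and a weight α > 0. Let ψ(p_X, p_Y) = (p_X/p_Y)^{(α−1)/(α+1)} for (p_X, p_Y) ∈ (0, P_X] × (0, P_Y] and 0 otherwise. Then there exists c > 0 such that, with L(p) = c·p^{α/(α+1)} for p > 0 (the liquidity allocation implied by the weighted product trading function f(x, y) = x^α·y), Y₀ = ∫₀^{p₀} L(p)/p dp = c·((α+1)/α)·p₀^{α/(α+1)}, X₀ = ∫_{p₀}^∞ L(p)/p² dp = c·(α+1)·p₀^{−1/(α+1)}, and P_X·X₀ + P_Y·Y₀ = B, the triple (L, X₀, Y₀) is optimal for ψ. -/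

import Mathlib

open MeasureTheory Set
open scoped ENNReal

noncomputable section

/-- The open positive orthant of `ℝ²`, on which prices live. -/
def orth : Set (ℝ × ℝ) := Set.Ioi 0 ×ˢ Set.Ioi 0

/-- The expected CFMM inefficiency `I_ψ(L) = ∬ ψ(p_X,p_Y) / (p_Y·L(p_X/p_Y)) dp_X dp_Y`,
a Lebesgue integral valued in `[0,∞]`; `ENNReal` division encodes the conventions
`c/0 = ∞` for `c > 0` and `0/0 = 0`. -/
def Ineff (ψ : ℝ × ℝ → ℝ) (L : ℝ → ℝ) : ℝ≥0∞ :=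
  ∫⁻ q in orth, ENNReal.ofReal (ψ q) / ENNReal.ofReal (q.2 * L (q.1 / q.2))

/-- Feasibility of a triple `(L, X₀, Y₀)` of a liquidity allocation and initial reserves,
for reference prices `P_X, P_Y` (so `p₀ = P_X / P_Y`) and budget `B`. -/
def Feasible (PX PY B : ℝ) (L : ℝ → ℝ) (X0 Y0 : ℝ) : Prop :=
  Measurable L ∧ (∀ p ∈ Set.Ioi (0:ℝ), 0 ≤ L p) ∧ 0 ≤ X0 ∧ 0 ≤ Y0 ∧
  (∫⁻ p in Set.Ioc (0:ℝ) (PX / PY), ENNReal.ofReal (L p / p)) ≤ ENNReal.ofReal Y0 ∧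
  (∫⁻ p in Set.Ioi (PX / PY), ENNReal.ofReal (L p / p ^ 2)) ≤ ENNReal.ofReal X0 ∧
  PX * X0 + PY * Y0 ≤ B

/-- A feasible triple is optimal for the belief `ψ` if it minimizes the expected CFMM
inefficiency over all feasible triples. -/
def IsOptimal (PX PY B : ℝ) (ψ : ℝ × ℝ → ℝ) (L : ℝ → ℝ) (X0 Y0 : ℝ) : Prop :=
  Feasible PX PY B L X0 Y0 ∧
  ∀ L' X0' Y0', Feasible PX PY B L' X0' Y0' → Ineff ψ L ≤ Ineff ψ L'


namespace S14

lemma lint_Ioc_rpow {s t : ℝ} (hs : -1 < s) (ht : 0 < t) :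
    ∫⁻ p in Ioc 0 t, ENNReal.ofReal (p ^ s) = ENNReal.ofReal (t ^ (s+1)/(s+1)) := by
  have hint : IntegrableOn (fun p : ℝ => p ^ s) (Ioc 0 t) := by
    have := (intervalIntegral.integrableOn_Ioo_rpow_iff ht).2 hs
    exact this.congr_set_ae Ioo_ae_eq_Ioc.symm |>.congr_set_ae (by rfl)
  rw [← ofReal_integral_eq_lintegral_ofReal hint ?nn]
  · rw [← intervalIntegral.integral_of_le ht.le, integral_rpow (Or.inl hs)]
    simp [Real.zero_rpow (by linarith : s + 1 ≠ 0)]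
  case nn =>
    filter_upwards [ae_restrict_mem measurableSet_Ioc] with p hp
    exact Real.rpow_nonneg hp.1.le s

lemma lint_Ioi_rpow {s t : ℝ} (hs : s < -1) (ht : 0 < t) :
    ∫⁻ p in Ioi t, ENNReal.ofReal (p ^ s) = ENNReal.ofReal (-t ^ (s+1)/(s+1)) := by
  rw [← ofReal_integral_eq_lintegral_ofReal (integrableOn_Ioi_rpow_of_lt hs ht) ?nn]
  · rw [integral_Ioi_rpow_of_lt hs ht]
  case nn =>
    filter_upwards [ae_restrict_mem measurableSet_Ioi] with p hp
    exact Real.rpow_nonneg (ht.trans hp).le s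


lemma cs_lintegral (μ : Measure ℝ) {f g h : ℝ → ℝ≥0∞}
    (hf : AEMeasurable f μ) (hg : AEMeasurable g μ)
    (hle : ∀ᵐ x ∂μ, h x * h x ≤ f x * g x) :
    (∫⁻ x, h x ∂μ) * (∫⁻ x, h x ∂μ) ≤ (∫⁻ x, f x ∂μ) * (∫⁻ x, g x ∂μ) := by
  have h2 : (2:ℝ).HolderConjugate 2 := Real.HolderConjugate.two_two
  have hsq : ∀ a : ℝ≥0∞, (a ^ (1/2:ℝ)) ^ (2:ℝ) = a := by
    intro a
    rw [← ENNReal.rpow_mul]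
    norm_num
  have hsqm : ∀ a : ℝ≥0∞, a ^ (1/2:ℝ) * a ^ (1/2:ℝ) = a := by
    intro a
    rw [← ENNReal.rpow_add_of_nonneg _ _ (by norm_num) (by norm_num)]
    norm_num
  have key : (∫⁻ x, h x ∂μ) ≤ (∫⁻ x, f x ∂μ) ^ (1/2:ℝ) * (∫⁻ x, g x ∂μ) ^ (1/2:ℝ) := by
    have H := ENNReal.lintegral_mul_le_Lp_mul_Lq μ h2
      (hf.pow_const (1/2:ℝ)) (hg.pow_const (1/2:ℝ))
    simp only [Pi.mul_apply, hsq] at H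
    refine le_trans (lintegral_mono_ae ?_) H
    filter_upwards [hle] with x hx
    calc h x = (h x * h x) ^ (1/2:ℝ) := by
          rw [ENNReal.mul_rpow_of_nonneg _ _ (by norm_num : (0:ℝ) ≤ 1/2), hsqm]
    _ ≤ (f x * g x) ^ (1/2:ℝ) := ENNReal.rpow_le_rpow hx (by norm_num)
    _ = f x ^ (1/2:ℝ) * g x ^ (1/2:ℝ) := ENNReal.mul_rpow_of_nonneg _ _ (by norm_num)
  calc (∫⁻ x, h x ∂μ) * (∫⁻ x, h x ∂μ)
      ≤ ((∫⁻ x, f x ∂μ) ^ (1/2:ℝ) * (∫⁻ x, g x ∂μ) ^ (1/2:ℝ)) *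
        ((∫⁻ x, f x ∂μ) ^ (1/2:ℝ) * (∫⁻ x, g x ∂μ) ^ (1/2:ℝ)) := mul_le_mul' key key
  _ = (∫⁻ x, f x ∂μ) * (∫⁻ x, g x ∂μ) := by
      rw [mul_mul_mul_comm, hsqm, hsqm]

lemma scale {y : ℝ} (hy : 0 < y) (t : ℝ) (G : ℝ → ℝ≥0∞) (hG : Measurable G) :
    ∫⁻ x in Ioc 0 t, G (x / y) = ENNReal.ofReal y * ∫⁻ p in Ioc 0 (t / y), G p := by
  have hmap := Real.map_volume_mul_left (ne_of_gt hy)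
  set H : ℝ → ℝ≥0∞ := (Ioc 0 t).indicator (fun x => G (x / y)) with hH
  have hHmeas : Measurable H := ((hG.comp (measurable_id.div_const y)).indicator measurableSet_Ioc)
  have key : ∫⁻ p, H (y * p) = ENNReal.ofReal |y⁻¹| * ∫⁻ x, H x := by
    rw [← lintegral_map hHmeas (measurable_const_mul y), hmap, lintegral_smul_measure, smul_eq_mul]
  have hHc : ∀ p, H (y * p) = (Ioc 0 (t / y)).indicator G p := by
    intro p
    by_cases hp : p ∈ Ioc 0 (t / y)
    · have h1 : y * p ∈ Ioc 0 t := by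
        constructor
        · exact mul_pos hy hp.1
        · rw [← le_div_iff₀' hy]; exact hp.2
      rw [indicator_of_mem hp, hH, indicator_of_mem h1]
      congr 1
      field_simp
    · have h1 : y * p ∉ Ioc 0 t := by
        intro h1
        exact hp ⟨by nlinarith [h1.1], by rw [le_div_iff₀' hy]; exact h1.2⟩
      rw [indicator_of_notMem hp, hH, indicator_of_notMem h1]
    
  calc ∫⁻ x in Ioc 0 t, G (x / y) = ∫⁻ x, H x := (lintegral_indicator measurableSet_Ioc _).symm
  _ = ENNReal.ofReal y * (ENNReal.ofReal |y⁻¹| * ∫⁻ x, H x) := by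
      rw [← mul_assoc, abs_of_pos (inv_pos.2 hy), ← ENNReal.ofReal_mul hy.le,
        mul_inv_cancel₀ (ne_of_gt hy)]
      simp
  _ = ENNReal.ofReal y * ∫⁻ p, H (y * p) := by rw [key]
  _ = ENNReal.ofReal y * ∫⁻ p in Ioc 0 (t / y), G p := by
      simp_rw [hHc]
      rw [lintegral_indicator measurableSet_Ioc]


lemma reduction {PX PY γ : ℝ} (hPX : 0 < PX) (hPY : 0 < PY)
    {L : ℝ → ℝ} (hL : Measurable L) (ψ : ℝ × ℝ → ℝ)
    (hψ : ψ = fun q => if q.1 ∈ Set.Ioc (0:ℝ) PX ∧ q.2 ∈ Set.Ioc (0:ℝ) PY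
        then (q.1 / q.2) ^ γ else 0) :
    Ineff ψ L = (∫⁻ p in Ioc 0 (PX / PY), ENNReal.ofReal (PY * p ^ γ) / ENNReal.ofReal (L p))
      + (∫⁻ p in Ioi (PX / PY), ENNReal.ofReal (PX * p ^ (γ - 1)) / ENNReal.ofReal (L p)) := by
  set G : ℝ → ℝ≥0∞ := fun p => ENNReal.ofReal (p ^ γ) / ENNReal.ofReal (L p) with hGdef
  have hG : Measurable G := by fun_prop
  set F : ℝ × ℝ → ℝ≥0∞ :=
    fun q => ENNReal.ofReal ((q.1 / q.2) ^ γ) / ENNReal.ofReal (q.2 * L (q.1 / q.2)) with hFdef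
  have hF : Measurable F := by fun_prop
  have hR : MeasurableSet (Ioc (0:ℝ) PX ×ˢ Ioc (0:ℝ) PY) :=
    measurableSet_Ioc.prod measurableSet_Ioc
  -- Step 1: restrict to the rectangle
  have h1 : Ineff ψ L = ∫⁻ q in Ioc (0:ℝ) PX ×ˢ Ioc (0:ℝ) PY, F q := by
    rw [Ineff, hψ]
    have hpt : ∀ q : ℝ × ℝ,
        ENNReal.ofReal (if q.1 ∈ Set.Ioc (0:ℝ) PX ∧ q.2 ∈ Set.Ioc (0:ℝ) PY
          then (q.1 / q.2) ^ γ else 0) / ENNReal.ofReal (q.2 * L (q.1 / q.2))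
        = (Ioc (0:ℝ) PX ×ˢ Ioc (0:ℝ) PY).indicator F q := by
      intro q
      by_cases hq : q.1 ∈ Set.Ioc (0:ℝ) PX ∧ q.2 ∈ Set.Ioc (0:ℝ) PY
      · rw [if_pos hq, indicator_of_mem (Set.mem_prod.2 hq)]
      · rw [if_neg hq, indicator_of_notMem (fun h => hq (Set.mem_prod.1 h))]
        simp
    simp_rw [hpt]
    rw [lintegral_indicator hR, Measure.restrict_restrict hR,
      inter_eq_left.mpr (by rintro ⟨x, y⟩ ⟨hx, hy⟩; exact ⟨hx.1, hy.1⟩)]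
  -- Step 2: Tonelli
  have h2 : ∫⁻ q in Ioc (0:ℝ) PX ×ˢ Ioc (0:ℝ) PY, F q
      = ∫⁻ y in Ioc (0:ℝ) PY, ∫⁻ x in Ioc (0:ℝ) PX, F (x, y) := by
    rw [Measure.volume_eq_prod, ← Measure.prod_restrict]
    exact lintegral_prod_symm F hF.aemeasurable
  -- Step 3: substitution in the inner integral
  have h3 : ∀ y ∈ Ioc (0:ℝ) PY,
      (∫⁻ x in Ioc (0:ℝ) PX, F (x, y)) = ∫⁻ p in Ioc 0 (PX / y), G p := by
    intro y hy
    have hy0 : 0 < y := hy.1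
    have hc0 : ENNReal.ofReal y ≠ 0 := by
      simp [ENNReal.ofReal_eq_zero, not_le, hy0]
    set Gy : ℝ → ℝ≥0∞ :=
      fun p => ENNReal.ofReal (p ^ γ) / (ENNReal.ofReal y * ENNReal.ofReal (L p)) with hGy
    have hGym : Measurable Gy := by fun_prop
    have e1 : ∀ x : ℝ, F (x, y) = Gy (x / y) := by
      intro x
      simp only [hFdef, hGy, ENNReal.ofReal_mul hy0.le]
    calc (∫⁻ x in Ioc (0:ℝ) PX, F (x, y)) = ∫⁻ x in Ioc (0:ℝ) PX, Gy (x / y) := by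
          simp_rw [e1]
    _ = ENNReal.ofReal y * ∫⁻ p in Ioc 0 (PX / y), Gy p := scale hy0 PX Gy hGym
    _ = ENNReal.ofReal y * ∫⁻ p in Ioc 0 (PX / y), (ENNReal.ofReal y)⁻¹ * G p := by
          congr 1
          refine lintegral_congr fun p => ?_
          show ENNReal.ofReal (p ^ γ) / (ENNReal.ofReal y * ENNReal.ofReal (L p))
            = (ENNReal.ofReal y)⁻¹ * (ENNReal.ofReal (p ^ γ) / ENNReal.ofReal (L p))
          rw [div_eq_mul_inv, div_eq_mul_inv,
            ENNReal.mul_inv (Or.inl hc0) (Or.inl ENNReal.ofReal_ne_top)]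
          ring
    _ = ∫⁻ p in Ioc 0 (PX / y), G p := by
          rw [lintegral_const_mul _ hG, ← mul_assoc,
            ENNReal.mul_inv_cancel hc0 ENNReal.ofReal_ne_top, one_mul]
  -- Step 4: swap and compute the y-measure
  have h4 : (∫⁻ y in Ioc (0:ℝ) PY, ∫⁻ p in Ioc 0 (PX / y), G p)
      = ∫⁻ p in Ioi (0:ℝ), ENNReal.ofReal (min PY (PX / p)) * G p := by
    set f : ℝ → ℝ → ℝ≥0∞ := fun y p => (Ioc 0 (PX / y)).indicator G p with hf
    have hfm : Measurable (Function.uncurry f) := by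
      have : Function.uncurry f
          = ({q : ℝ × ℝ | 0 < q.2 ∧ q.2 ≤ PX / q.1}).indicator (fun q => G q.2) := by
        ext q
        simp only [hf, Function.uncurry, indicator_apply, mem_Ioc, mem_setOf_eq]
      rw [this]
      have hS : MeasurableSet {q : ℝ × ℝ | 0 < q.2 ∧ q.2 ≤ PX / q.1} :=
        (measurableSet_lt measurable_const measurable_snd).inter
          (measurableSet_le measurable_snd (measurable_const.div measurable_fst))
      exact (hG.comp measurable_snd).indicator hS
    calc (∫⁻ y in Ioc (0:ℝ) PY, ∫⁻ p in Ioc 0 (PX / y), G p)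
        = ∫⁻ y in Ioc (0:ℝ) PY, ∫⁻ p, f y p := by
          refine lintegral_congr fun y => ?_
          rw [hf, lintegral_indicator measurableSet_Ioc]
    _ = ∫⁻ p, ∫⁻ y in Ioc (0:ℝ) PY, f y p := lintegral_lintegral_swap hfm.aemeasurable
    _ = ∫⁻ p, (Ioi (0:ℝ)).indicator (fun p => ENNReal.ofReal (min PY (PX / p)) * G p) p := by
          refine lintegral_congr fun p => ?_
          by_cases hp : 0 < p
          · rw [show (Ioi (0:ℝ)).indicator
                (fun p => ENNReal.ofReal (min PY (PX / p)) * G p) p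
                = ENNReal.ofReal (min PY (PX / p)) * G p from
              indicator_of_mem (mem_Ioi.mpr hp) _]
            have e2 : ∀ y ∈ Ioc (0:ℝ) PY,
                f y p = (Iic (PX / p)).indicator (fun _ => G p) y := by
              intro y hy
              have hiff : p ∈ Ioc 0 (PX / y) ↔ y ∈ Iic (PX / p) := by
                simp only [mem_Ioc, mem_Iic]
                rw [le_div_iff₀ hy.1, le_div_iff₀ hp]
                constructor
                · rintro ⟨-, h⟩; nlinarith
                · intro h; exact ⟨hp, by nlinarith⟩
              by_cases hyp : y ∈ Iic (PX / p)
              · rw [indicator_of_mem hyp]; simp only [hf]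
                rw [indicator_of_mem (hiff.2 hyp)]
              · rw [indicator_of_notMem hyp]; simp only [hf]
                rw [indicator_of_notMem (fun hm => hyp (hiff.1 hm))]
            rw [setLIntegral_congr_fun measurableSet_Ioc e2,
              lintegral_indicator_const measurableSet_Iic,
              Measure.restrict_apply measurableSet_Iic]
            have : Iic (PX / p) ∩ Ioc 0 PY = Ioc 0 (min (PX / p) PY) := by
              ext z; simp only [mem_inter_iff, mem_Iic, mem_Ioc, le_min_iff]; tauto
            rw [this, Real.volume_Ioc, sub_zero, min_comm, mul_comm]
          · rw [show (Ioi (0:ℝ)).indicator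
                (fun p => ENNReal.ofReal (min PY (PX / p)) * G p) p = 0 from
              indicator_of_notMem (by simpa using hp) _]
            have : ∀ y ∈ Ioc (0:ℝ) PY, f y p = 0 := by
              intro y hy
              simp only [hf]
              rw [indicator_of_notMem (fun hmem => hp (mem_Ioc.1 hmem).1)]
            rw [setLIntegral_congr_fun measurableSet_Ioc this, lintegral_zero]
    _ = ∫⁻ p in Ioi (0:ℝ), ENNReal.ofReal (min PY (PX / p)) * G p := by
          rw [lintegral_indicator measurableSet_Ioi]
  -- Step 5: split at p₀
  have hp₀ : 0 < PX / PY := div_pos hPX hPY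
  have h5 : (∫⁻ p in Ioi (0:ℝ), ENNReal.ofReal (min PY (PX / p)) * G p)
      = (∫⁻ p in Ioc (0:ℝ) (PX / PY), ENNReal.ofReal (PY * p ^ γ) / ENNReal.ofReal (L p))
        + ∫⁻ p in Ioi (PX / PY), ENNReal.ofReal (PX * p ^ (γ - 1)) / ENNReal.ofReal (L p) := by
    rw [← Ioc_union_Ioi_eq_Ioi hp₀.le, lintegral_union measurableSet_Ioi Ioc_disjoint_Ioi_same]
    congr 1
    · refine setLIntegral_congr_fun measurableSet_Ioc (fun p hp => ?_)
      have h2' : p * PY ≤ PX := (le_div_iff₀ hPY).1 hp.2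
      have hmin : min PY (PX / p) = PY :=
        min_eq_left (by rw [le_div_iff₀ hp.1]; nlinarith)
      rw [hmin, hGdef, ENNReal.ofReal_mul hPY.le, mul_div_assoc]
    · refine setLIntegral_congr_fun measurableSet_Ioi (fun p hp => ?_)
      have hp0 : 0 < p := hp₀.trans hp
      have h2' : PX < p * PY := (div_lt_iff₀ hPY).1 hp
      have hmin : min PY (PX / p) = PX / p := by
        refine min_eq_right ?_
        rw [div_le_iff₀ hp0]
        nlinarith
      rw [hmin, hGdef]
      rw [show PX * p ^ (γ - 1) = PX / p * p ^ γ by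
        rw [Real.rpow_sub_one hp0.ne']; field_simp]
      rw [ENNReal.ofReal_mul (by positivity), mul_div_assoc]
  rw [h1, h2, setLIntegral_congr_fun measurableSet_Ioc h3, h4, h5]


end S14

/-!
STATEMENT 14: For the belief `ψ(p_X, p_Y) = (p_X/p_Y)^((α−1)/(α+1))` on
`(0, P_X] × (0, P_Y]` (and `0` elsewhere), the allocation `L(p) = c·p^(α/(α+1))` implied
by the weighted product trading function `f(x,y) = x^α·y` — with the reserves it implies,
`Y₀ = c·((α+1)/α)·p₀^(α/(α+1))` and `X₀ = c·(α+1)·p₀^(−1/(α+1))`, and the budget spent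
exactly — is optimal, for a suitable `c > 0`.
-/

set_option maxHeartbeats 1000000 in
theorem stmt_14 (PX PY B α : ℝ) (hPX : 0 < PX) (hPY : 0 < PY) (hB : 0 < B)
    (hα : 0 < α)
    (ψ : ℝ × ℝ → ℝ)
    (hψ : ψ = fun q => if q.1 ∈ Set.Ioc (0:ℝ) PX ∧ q.2 ∈ Set.Ioc (0:ℝ) PY
        then (q.1 / q.2) ^ ((α - 1) / (α + 1)) else 0) :
    ∃ c > (0:ℝ), ∃ X0 Y0 : ℝ,
      Y0 = c * ((α + 1) / α) * (PX / PY) ^ (α / (α + 1)) ∧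
      X0 = c * (α + 1) * (PX / PY) ^ (-(1 : ℝ) / (α + 1)) ∧
      (∫⁻ p in Set.Ioc (0:ℝ) (PX / PY),
          ENNReal.ofReal ((c * p ^ (α / (α + 1))) / p)) = ENNReal.ofReal Y0 ∧
      (∫⁻ p in Set.Ioi (PX / PY),
          ENNReal.ofReal ((c * p ^ (α / (α + 1))) / p ^ 2)) = ENNReal.ofReal X0 ∧
      PX * X0 + PY * Y0 = B ∧
      Feasible PX PY B (fun p => c * p ^ (α / (α + 1))) X0 Y0 ∧
      ∀ L' X0' Y0', Feasible PX PY B L' X0' Y0' →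
        Ineff ψ (fun p => c * p ^ (α / (α + 1))) ≤ Ineff ψ L' := by
  have hα1 : (0:ℝ) < α + 1 := by linarith
  set p₀ := PX / PY with hp₀def
  have hp₀ : 0 < p₀ := div_pos hPX hPY
  set β := α / (α + 1) with hβdef
  set γ := (α - 1) / (α + 1) with hγdef
  have hβ1 : β - 1 = -(1 : ℝ) / (α + 1) := by
    rw [hβdef]; field_simp; ring
  have hβ1' : (-1:ℝ) < β - 1 := by
    rw [hβ1]
    have h1 : (1:ℝ)/(α+1) < 1 := by rw [div_lt_one hα1]; linarith
    have : -(1:ℝ)/(α+1) = -(1/(α+1)) := by ring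
    rw [this]; linarith
  have hβ2' : β - 2 < -1 := by
    have h0 : (0:ℝ) < 1/(α+1) := by positivity
    have : β - 2 = -(1:ℝ)/(α+1) - 1 := by rw [← hβ1]; ring
    rw [this]
    have : -(1:ℝ)/(α+1) = -(1/(α+1)) := by ring
    rw [this]; linarith
  have hγβ : γ - β = β - 1 := by rw [hγdef, hβdef]; field_simp; ring
  have hγ1β : γ - 1 - β = β - 2 := by rw [hγdef, hβdef]; field_simp; ring_nf
  set D₁ := ((α + 1) / α) * p₀ ^ β with hD₁def
  set D₂ := (α + 1) * p₀ ^ (-(1 : ℝ) / (α + 1)) with hD₂def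
  have hD₂' : D₂ = (α + 1) * p₀ ^ (β - 1) := by rw [hD₂def, hβ1]
  have hD₁pos : 0 < D₁ := mul_pos (div_pos hα1 hα) (Real.rpow_pos_of_pos hp₀ _)
  have hD₂pos : 0 < D₂ := mul_pos hα1 (Real.rpow_pos_of_pos hp₀ _)
  have hSpos : 0 < PY * D₁ + PX * D₂ :=
    add_pos (mul_pos hPY hD₁pos) (mul_pos hPX hD₂pos)
  set c := B / (PY * D₁ + PX * D₂) with hcdef
  have hc : 0 < c := div_pos hB hSpos
  -- helper integrals
  have helper1 : ∀ t : ℝ, 0 ≤ t →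
      (∫⁻ p in Set.Ioc (0:ℝ) p₀, ENNReal.ofReal (t * p ^ (β - 1)))
        = ENNReal.ofReal (t * D₁) := by
    intro t ht
    have : ∀ p : ℝ, ENNReal.ofReal (t * p ^ (β - 1))
        = ENNReal.ofReal t * ENNReal.ofReal (p ^ (β - 1)) := fun p =>
      ENNReal.ofReal_mul ht
    simp_rw [this]
    rw [lintegral_const_mul _ (by fun_prop), S14.lint_Ioc_rpow hβ1' hp₀,
      ← ENNReal.ofReal_mul ht]
    congr 1
    rw [show β - 1 + 1 = β by ring]
    congr 1
    rw [hD₁def, hβdef]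
    have hne : p₀ ^ (α / (α+1)) ≠ 0 := (Real.rpow_pos_of_pos hp₀ _).ne'
    field_simp
  have helper2 : ∀ t : ℝ, 0 ≤ t →
      (∫⁻ p in Set.Ioi p₀, ENNReal.ofReal (t * p ^ (β - 2)))
        = ENNReal.ofReal (t * D₂) := by
    intro t ht
    have : ∀ p : ℝ, ENNReal.ofReal (t * p ^ (β - 2))
        = ENNReal.ofReal t * ENNReal.ofReal (p ^ (β - 2)) := fun p =>
      ENNReal.ofReal_mul ht
    simp_rw [this]
    rw [lintegral_const_mul _ (by fun_prop), S14.lint_Ioi_rpow hβ2' hp₀,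
      ← ENNReal.ofReal_mul ht]
    congr 1
    rw [show β - 2 + 1 = β - 1 by ring]
    congr 1
    rw [hD₂', hβ1]
    have hne : p₀ ^ (-(1:ℝ)/(α+1)) ≠ 0 := (Real.rpow_pos_of_pos hp₀ _).ne'
    have hβ1ne : -(1:ℝ)/(α+1) ≠ 0 := by
      have h0 : (0:ℝ) < 1/(α+1) := by positivity
      rw [neg_div]
      intro h
      linarith [neg_eq_zero.mp h]
    field_simp
  -- the two reserve integrals
  have hYint : (∫⁻ p in Set.Ioc (0:ℝ) p₀, ENNReal.ofReal ((c * p ^ β) / p))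
      = ENNReal.ofReal (c * D₁) := by
    rw [setLIntegral_congr_fun measurableSet_Ioc
      (fun p hp => ?_), helper1 c hc.le]
    congr 1
    rw [Real.rpow_sub_one hp.1.ne']
    ring
  have hXint : (∫⁻ p in Set.Ioi p₀, ENNReal.ofReal ((c * p ^ β) / p ^ 2))
      = ENNReal.ofReal (c * D₂) := by
    rw [setLIntegral_congr_fun measurableSet_Ioi
      (fun p hp => ?_), helper2 c hc.le]
    have hp0 : (0:ℝ) < p := hp₀.trans hp
    congr 1
    rw [Real.rpow_sub hp0, show (2:ℝ) = ((2:ℕ):ℝ) by norm_num, Real.rpow_natCast]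
    ring
  have hbudget : PX * (c * D₂) + PY * (c * D₁) = B := by
    rw [hcdef]
    field_simp
    ring
  refine ⟨c, hc, c * D₂, c * D₁, ?_, ?_, hYint, hXint, hbudget, ?_, ?_⟩
  · rw [hD₁def]; ring
  · rw [hD₂def]; ring
  · -- Feasibility
    refine ⟨by fun_prop, fun p hp => ?_, mul_nonneg hc.le hD₂pos.le,
      mul_nonneg hc.le hD₁pos.le,
      le_of_eq hYint, le_of_eq hXint, le_of_eq hbudget⟩
    exact mul_nonneg hc.le (Real.rpow_nonneg (le_of_lt hp) β)
  · -- Optimality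
    intro L' X0' Y0' hF
    obtain ⟨hL'm, hL'nn, hX0nn, hY0nn, hA1, hA2, hbud⟩ := hF
    rw [S14.reduction hPX hPY (by fun_prop : Measurable fun p : ℝ => c * p ^ β) ψ hψ,
      S14.reduction hPX hPY hL'm ψ hψ]
    -- compute our inefficiency
    have hT1ours : (∫⁻ p in Set.Ioc (0:ℝ) p₀,
        ENNReal.ofReal (PY * p ^ γ) / ENNReal.ofReal (c * p ^ β))
        = ENNReal.ofReal (PY / c * D₁) := by
      rw [setLIntegral_congr_fun measurableSet_Ioc
        (fun p hp => ?_), helper1 (PY / c) (div_pos hPY hc).le]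
      rw [← ENNReal.ofReal_div_of_pos (mul_pos hc (Real.rpow_pos_of_pos hp.1 β))]
      congr 1
      rw [← hγβ, Real.rpow_sub hp.1 γ β, div_mul_div_comm]
    have hT2ours : (∫⁻ p in Set.Ioi p₀,
        ENNReal.ofReal (PX * p ^ (γ - 1)) / ENNReal.ofReal (c * p ^ β))
        = ENNReal.ofReal (PX / c * D₂) := by
      rw [setLIntegral_congr_fun measurableSet_Ioi
        (fun p hp => ?_), helper2 (PX / c) (div_pos hPX hc).le]
      have hp0 : (0:ℝ) < p := hp₀.trans hp
      rw [← ENNReal.ofReal_div_of_pos (mul_pos hc (Real.rpow_pos_of_pos hp0 β))]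
      congr 1
      rw [← hγ1β, Real.rpow_sub hp0 (γ - 1) β, div_mul_div_comm]
    rw [hT1ours, hT2ours, ← ENNReal.ofReal_add
      (mul_nonneg (div_pos hPY hc).le hD₁pos.le)
      (mul_nonneg (div_pos hPX hc).le hD₂pos.le)]
    set T1 := ∫⁻ p in Set.Ioc (0:ℝ) p₀,
        ENNReal.ofReal (PY * p ^ γ) / ENNReal.ofReal (L' p) with hT1def
    set T2 := ∫⁻ p in Set.Ioi p₀,
        ENNReal.ofReal (PX * p ^ (γ - 1)) / ENNReal.ofReal (L' p) with hT2def
    by_cases hfin1 : T1 = ⊤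
    · rw [hfin1, top_add]; exact le_top
    by_cases hfin2 : T2 = ⊤
    · rw [hfin2, add_top]; exact le_top
    -- Cauchy-Schwarz on the first piece
    have hmf1 : Measurable fun x : ℝ =>
        ENNReal.ofReal (PY * x ^ γ) / ENNReal.ofReal (L' x) := by fun_prop
    have hmf2 : Measurable fun x : ℝ =>
        ENNReal.ofReal (PX * x ^ (γ - 1)) / ENNReal.ofReal (L' x) := by fun_prop
    have haeL1 : ∀ᵐ x ∂(volume.restrict (Set.Ioc (0:ℝ) p₀)),
        x ∈ Set.Ioc (0:ℝ) p₀ → 0 < L' x := by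
      filter_upwards [ae_lt_top' hmf1.aemeasurable hfin1, ae_restrict_mem measurableSet_Ioc]
        with x hx1 _ hx2
      by_contra hL0
      have h0 : ENNReal.ofReal (L' x) = 0 := by
        rw [ENNReal.ofReal_eq_zero]; linarith [not_lt.mp hL0]
      rw [h0, ENNReal.div_zero (by
        rw [ne_eq, ENNReal.ofReal_eq_zero, not_le]
        exact mul_pos hPY (Real.rpow_pos_of_pos hx2.1 _))] at hx1
      exact (lt_irrefl _ hx1).elim
    have haeL2 : ∀ᵐ x ∂(volume.restrict (Set.Ioi p₀)),
        x ∈ Set.Ioi p₀ → 0 < L' x := by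
      filter_upwards [ae_lt_top' hmf2.aemeasurable hfin2, ae_restrict_mem measurableSet_Ioi]
        with x hx1 _ hx2
      by_contra hL0
      have h0 : ENNReal.ofReal (L' x) = 0 := by
        rw [ENNReal.ofReal_eq_zero]; linarith [not_lt.mp hL0]
      rw [h0, ENNReal.div_zero (by
        rw [ne_eq, ENNReal.ofReal_eq_zero, not_le]
        exact mul_pos hPX (Real.rpow_pos_of_pos (hp₀.trans hx2) _))] at hx1
      exact (lt_irrefl _ hx1).elim
    have hsum1 : β - 1 + (β - 1) = γ - 1 := by
      rw [hβdef, hγdef]; field_simp; ring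
    have hsum2 : β - 2 + (β - 2) = γ - 3 := by
      rw [hβdef, hγdef]; field_simp; ring
    have key1 : ENNReal.ofReal (PY * (D₁ * D₁)) ≤ T1 * ENNReal.ofReal Y0' := by
      have hcs := S14.cs_lintegral (volume.restrict (Set.Ioc (0:ℝ) p₀))
        (f := fun x => ENNReal.ofReal (PY * x ^ γ) / ENNReal.ofReal (L' x))
        (g := fun x => ENNReal.ofReal (L' x / x))
        (h := fun x => ENNReal.ofReal (Real.sqrt PY * x ^ (β - 1)))
        hmf1.aemeasurable (by fun_prop) ?_
      · have hh := helper1 (Real.sqrt PY) (Real.sqrt_nonneg PY)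
        calc ENNReal.ofReal (PY * (D₁ * D₁))
            = ENNReal.ofReal (Real.sqrt PY * D₁) * ENNReal.ofReal (Real.sqrt PY * D₁) := by
              rw [← ENNReal.ofReal_mul (mul_nonneg (Real.sqrt_nonneg _) hD₁pos.le)]
              congr 1
              rw [show Real.sqrt PY * D₁ * (Real.sqrt PY * D₁)
                  = Real.sqrt PY * Real.sqrt PY * (D₁ * D₁) by ring,
                Real.mul_self_sqrt hPY.le]
        _ ≤ T1 * ∫⁻ x in Set.Ioc (0:ℝ) p₀, ENNReal.ofReal (L' x / x) := by
              rw [← hh]; exact hcs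
        _ ≤ T1 * ENNReal.ofReal Y0' := mul_le_mul_right hA1 _
      · filter_upwards [haeL1, ae_restrict_mem measurableSet_Ioc] with x hxL hx
        have hx0 : 0 < x := hx.1
        have hLx : 0 < L' x := hxL hx
        have hLne : ENNReal.ofReal (L' x) ≠ 0 := by
          rw [ne_eq, ENNReal.ofReal_eq_zero, not_le]; exact hLx
        have hh : ENNReal.ofReal (Real.sqrt PY * x ^ (β - 1))
            * ENNReal.ofReal (Real.sqrt PY * x ^ (β - 1))
            = ENNReal.ofReal (PY * x ^ (γ - 1)) := by
          rw [← ENNReal.ofReal_mul (mul_nonneg (Real.sqrt_nonneg _) (Real.rpow_nonneg hx0.le _))]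
          congr 1
          rw [show Real.sqrt PY * x ^ (β-1) * (Real.sqrt PY * x ^ (β-1))
              = Real.sqrt PY * Real.sqrt PY * (x ^ (β-1) * x ^ (β-1)) by ring,
            Real.mul_self_sqrt hPY.le, ← Real.rpow_add hx0, hsum1]
        have hfg : (ENNReal.ofReal (PY * x ^ γ) / ENNReal.ofReal (L' x))
            * ENNReal.ofReal (L' x / x) = ENNReal.ofReal (PY * x ^ (γ - 1)) := by
          rw [div_eq_mul_inv, mul_right_comm,
            ← ENNReal.ofReal_mul (mul_nonneg hPY.le (Real.rpow_nonneg hx0.le _)),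
            show PY * x ^ γ * (L' x / x) = PY * x ^ (γ - 1) * L' x by
              rw [Real.rpow_sub_one hx0.ne']; field_simp <;> ring_nf,
            ENNReal.ofReal_mul (mul_nonneg hPY.le (Real.rpow_nonneg hx0.le _)),
            mul_assoc, ENNReal.mul_inv_cancel hLne ENNReal.ofReal_ne_top, mul_one]
        exact le_of_eq (hh.trans hfg.symm)
    have key2 : ENNReal.ofReal (PX * (D₂ * D₂)) ≤ T2 * ENNReal.ofReal X0' := by
      have hcs := S14.cs_lintegral (volume.restrict (Set.Ioi p₀))
        (f := fun x => ENNReal.ofReal (PX * x ^ (γ - 1)) / ENNReal.ofReal (L' x))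
        (g := fun x => ENNReal.ofReal (L' x / x ^ 2))
        (h := fun x => ENNReal.ofReal (Real.sqrt PX * x ^ (β - 2)))
        hmf2.aemeasurable (by fun_prop) ?_
      · have hh := helper2 (Real.sqrt PX) (Real.sqrt_nonneg PX)
        calc ENNReal.ofReal (PX * (D₂ * D₂))
            = ENNReal.ofReal (Real.sqrt PX * D₂) * ENNReal.ofReal (Real.sqrt PX * D₂) := by
              rw [← ENNReal.ofReal_mul (mul_nonneg (Real.sqrt_nonneg _) hD₂pos.le)]
              congr 1
              rw [show Real.sqrt PX * D₂ * (Real.sqrt PX * D₂)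
                  = Real.sqrt PX * Real.sqrt PX * (D₂ * D₂) by ring,
                Real.mul_self_sqrt hPX.le]
        _ ≤ T2 * ∫⁻ x in Set.Ioi p₀, ENNReal.ofReal (L' x / x ^ 2) := by
              rw [← hh]; exact hcs
        _ ≤ T2 * ENNReal.ofReal X0' := mul_le_mul_right hA2 _
      · filter_upwards [haeL2, ae_restrict_mem measurableSet_Ioi] with x hxL hx
        have hx0 : 0 < x := hp₀.trans hx
        have hLx : 0 < L' x := hxL hx
        have hLne : ENNReal.ofReal (L' x) ≠ 0 := by
          rw [ne_eq, ENNReal.ofReal_eq_zero, not_le]; exact hLx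
        have hx2 : x ^ (γ - 3) = x ^ (γ - 1) / x ^ 2 := by
          rw [show γ - 3 = γ - 1 - 2 by ring, Real.rpow_sub hx0,
            show (2:ℝ) = ((2:ℕ):ℝ) by norm_num, Real.rpow_natCast]
        have hh : ENNReal.ofReal (Real.sqrt PX * x ^ (β - 2))
            * ENNReal.ofReal (Real.sqrt PX * x ^ (β - 2))
            = ENNReal.ofReal (PX * x ^ (γ - 3)) := by
          rw [← ENNReal.ofReal_mul (mul_nonneg (Real.sqrt_nonneg _) (Real.rpow_nonneg hx0.le _))]
          congr 1
          rw [show Real.sqrt PX * x ^ (β-2) * (Real.sqrt PX * x ^ (β-2))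
              = Real.sqrt PX * Real.sqrt PX * (x ^ (β-2) * x ^ (β-2)) by ring,
            Real.mul_self_sqrt hPX.le, ← Real.rpow_add hx0, hsum2]
        have hfg : (ENNReal.ofReal (PX * x ^ (γ - 1)) / ENNReal.ofReal (L' x))
            * ENNReal.ofReal (L' x / x ^ 2) = ENNReal.ofReal (PX * x ^ (γ - 3)) := by
          rw [div_eq_mul_inv, mul_right_comm,
            ← ENNReal.ofReal_mul (mul_nonneg hPX.le (Real.rpow_nonneg hx0.le _)),
            show PX * x ^ (γ - 1) * (L' x / x ^ 2) = PX * x ^ (γ - 3) * L' x by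
              rw [hx2]; field_simp <;> ring_nf,
            ENNReal.ofReal_mul (mul_nonneg hPX.le (Real.rpow_nonneg hx0.le _)),
            mul_assoc, ENNReal.mul_inv_cancel hLne ENNReal.ofReal_ne_top, mul_one]
        exact le_of_eq (hh.trans hfg.symm)
    -- pass to the reals
    have ht1 : T1 = ENNReal.ofReal T1.toReal := (ENNReal.ofReal_toReal hfin1).symm
    have ht2 : T2 = ENNReal.ofReal T2.toReal := (ENNReal.ofReal_toReal hfin2).symm
    set t₁ := T1.toReal with ht₁def
    set t₂ := T2.toReal with ht₂def
    have ht₁nn : 0 ≤ t₁ := ENNReal.toReal_nonneg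
    have ht₂nn : 0 ≤ t₂ := ENNReal.toReal_nonneg
    have r1 : PY * (D₁ * D₁) ≤ t₁ * Y0' := by
      rw [ht1, ← ENNReal.ofReal_mul ht₁nn] at key1
      exact (ENNReal.ofReal_le_ofReal_iff (mul_nonneg ht₁nn hY0nn)).mp key1
    have r2 : PX * (D₂ * D₂) ≤ t₂ * X0' := by
      rw [ht2, ← ENNReal.ofReal_mul ht₂nn] at key2
      exact (ENNReal.ofReal_le_ofReal_iff (mul_nonneg ht₂nn hX0nn)).mp key2
    have hY0pos : 0 < Y0' := by
      rcases hY0nn.lt_or_eq with h | h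
      · exact h
      · exfalso
        rw [← h, mul_zero] at r1
        linarith [mul_pos hPY (mul_pos hD₁pos hD₁pos)]
    have hX0pos : 0 < X0' := by
      rcases hX0nn.lt_or_eq with h | h
      · exact h
      · exfalso
        rw [← h, mul_zero] at r2
        linarith [mul_pos hPX (mul_pos hD₂pos hD₂pos)]
    rw [ht1, ht2, ← ENNReal.ofReal_add ht₁nn ht₂nn]
    apply ENNReal.ofReal_le_ofReal
    have hceq : c * (PY * D₁ + PX * D₂) = B := by
      rw [hcdef]; field_simp
    have hgoal : PY / c * D₁ + PX / c * D₂
        = (PY * D₁ + PX * D₂) * (PY * D₁ + PX * D₂) / B := by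
      rw [eq_div_iff hB.ne', ← hceq]
      field_simp
    rw [hgoal]
    rw [div_le_iff₀ hB]
    have H1 := mul_le_mul_of_nonneg_left r1
      (mul_nonneg (mul_nonneg hPY.le hX0pos.le) hY0pos.le)
    have H2 := mul_le_mul_of_nonneg_left r2
      (mul_nonneg (mul_nonneg hPX.le hX0pos.le) hY0pos.le)
    have H3 := mul_le_mul_of_nonneg_left r1
      (mul_nonneg (mul_nonneg hPX.le hX0pos.le) hX0pos.le)
    have H4 := mul_le_mul_of_nonneg_left r2
      (mul_nonneg (mul_nonneg hPY.le hY0pos.le) hY0pos.le)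
    have H5 : 0 ≤ (t₁ + t₂) * (B - (PX * X0' + PY * Y0')) * (X0' * Y0') :=
      mul_nonneg (mul_nonneg (by linarith) (by linarith)) (by positivity)
    have H6 : 0 ≤ PX * PY * (X0' * D₁ - Y0' * D₂) ^ 2 :=
      mul_nonneg (mul_nonneg hPX.le hPY.le) (sq_nonneg _)
    have hXY : 0 < X0' * Y0' := mul_pos hX0pos hY0pos
    have hfinal : (PY * D₁ + PX * D₂) * (PY * D₁ + PX * D₂) * (X0' * Y0')
        ≤ (t₁ + t₂) * B * (X0' * Y0') := by linarith [H1, H2, H3, H4, H5, H6]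
    exact le_of_mul_le_mul_right (by linarith) hXY
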